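/- Let G be a chordless graph. Then G is sparse, or G admits a 1-cutset, or G admits a proper 2-cutset. -/

import Mathlib

open SimpleGraph

/-- A graph is chordless if every cycle is induced: any edge between two vertices of a
cycle is an edge of the cycle. -/
def SimpleGraph.IsChordless {V : Type*} (G : SimpleGraph V) : Prop :=
  ∀ (v : V) (c : G.Walk v v), c.IsCycle →
    ∀ u w : V, u ∈ c.support → w ∈ c.support → G.Adj u w → s(u, w) ∈ c.edges

/-- A graph is sparse if no two adjacent vertices both have degree at least 3. -/
def SimpleGraph.IsSparse {V : Type*} (G : SimpleGraph V) : Prop :=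
  ∀ u v : V, G.Adj u v → ¬ (3 ≤ (G.neighborSet u).ncard ∧ 3 ≤ (G.neighborSet v).ncard)

/-- The induced subgraph of `G` on `X ∪ {a, b}` is exactly a path from `a` to `b`:
there is an induced path from `a` to `b` whose support is `X ∪ {a, b}` and which carries
all edges of `G` inside this set. -/
def SimpleGraph.InduceIsPathFromTo {V : Type*} (G : SimpleGraph V) (X : Set V) (a b : V) :
    Prop :=
  ∃ p : G.Walk a b, p.IsPath ∧ {v | v ∈ p.support} = X ∪ {a, b} ∧
    ∀ u w : V, u ∈ p.support → w ∈ p.support → G.Adj u w → s(u, w) ∈ p.edges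

namespace ChordlessProofAux

variable {V : Type*} {G : SimpleGraph V}

/-- In a path, at most one edge at the starting vertex. -/
lemma start_edge_unique {a b x1 x2 : V} (p : G.Walk a b) (hp : p.IsPath)
    (h1 : s(a, x1) ∈ p.edges) (h2 : s(a, x2) ∈ p.edges) : x1 = x2 := by
  cases p with
  | nil => simp at h1
  | cons h q =>
    rw [Walk.cons_isPath_iff] at hp
    rw [Walk.edges_cons, List.mem_cons] at h1 h2
    rcases h1 with h1 | h1
    · rcases h2 with h2 | h2
      · rw [Sym2.eq_iff] at h1 h2
        rcases h1 with ⟨-, rfl⟩ | ⟨rfl, rfl⟩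
        · rcases h2 with ⟨-, rfl⟩ | ⟨h2, -⟩
          · rfl
          · exact absurd h2 h.ne
        · exact absurd rfl h.ne
      · exact absurd (Walk.fst_mem_support_of_mem_edges q h2) hp.2
    · exact absurd (Walk.fst_mem_support_of_mem_edges q h1) hp.2

/-- A path cannot have three distinct edges at a single vertex. -/
lemma path_no_three {a b : V} (p : G.Walk a b) (hp : p.IsPath) {z x1 x2 x3 : V}
    (h1 : s(z, x1) ∈ p.edges) (h2 : s(z, x2) ∈ p.edges) (h3 : s(z, x3) ∈ p.edges)
    (h12 : x1 ≠ x2) (h13 : x1 ≠ x3) (h23 : x2 ≠ x3) : False := by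
  induction p with
  | nil => simp at h1
  | @cons a c b h q ih =>
    rw [Walk.cons_isPath_iff] at hp
    rw [Walk.edges_cons, List.mem_cons] at h1 h2 h3
    by_cases hz : z = a
    · subst hz
      have key : ∀ x : V, s(z, x) = s(z, c) ∨ s(z, x) ∈ q.edges → x = c := by
        rintro x (hx | hx)
        · rw [Sym2.eq_iff] at hx
          rcases hx with ⟨-, rfl⟩ | ⟨rfl, -⟩
          · rfl
          · exact absurd rfl h.ne
        · exact absurd (Walk.fst_mem_support_of_mem_edges q hx) hp.2
      exact h12 ((key _ h1).trans (key _ h2).symm)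
    · -- each membership is either (z = c ∧ xi = a) or in q.edges
      have key : ∀ x : V, s(z, x) = s(a, c) ∨ s(z, x) ∈ q.edges →
          (z = c ∧ x = a) ∨ s(z, x) ∈ q.edges := by
        rintro x (hx | hx)
        · rw [Sym2.eq_iff] at hx
          rcases hx with ⟨rfl, rfl⟩ | ⟨rfl, rfl⟩
          · exact absurd rfl hz
          · exact Or.inl ⟨rfl, rfl⟩
        · exact Or.inr hx
      rcases key _ h1 with ⟨hzc1, hx1⟩ | h1' <;>
        rcases key _ h2 with ⟨hzc2, hx2⟩ | h2' <;>
        rcases key _ h3 with ⟨hzc3, hx3⟩ | h3'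
      · exact h12 (hx1.trans hx2.symm)
      · exact h12 (hx1.trans hx2.symm)
      · exact h13 (hx1.trans hx3.symm)
      · subst hzc1; exact h23 (start_edge_unique q hp.1 h2' h3')
      · exact h23 (hx2.trans hx3.symm)
      · subst hzc2; exact h13 (start_edge_unique q hp.1 h1' h3')
      · subst hzc3; exact h12 (start_edge_unique q hp.1 h1' h2')
      · exact ih hp.1 h1' h2' h3'


lemma path_edge_ends {a b : V} (p : G.Walk a b) (hp : p.IsPath)
    (h : s(a, b) ∈ p.edges) : p.length = 1 := by
  cases p with
  | nil => simp at h
  | @cons a c b h' q =>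
    rw [Walk.cons_isPath_iff] at hp
    rw [Walk.edges_cons, List.mem_cons] at h
    rcases h with h | h
    · rw [Sym2.eq_iff] at h
      rcases h with ⟨-, rfl⟩ | ⟨rfl, rfl⟩
      · rw [(Walk.isPath_iff_eq_nil (p := q)).mp hp.1]; rfl
      · exact absurd rfl h'.ne
    · exact absurd (Walk.fst_mem_support_of_mem_edges q h) hp.2

lemma concat_isPath {a b c : V} (p : G.Walk a b) (hp : p.IsPath) (h : G.Adj b c)
    (hc : c ∉ p.support) : (p.concat h).IsPath := by
  rw [Walk.isPath_def, Walk.support_concat]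
  rw [List.nodup_append]
  refine ⟨hp.support_nodup, List.nodup_singleton c, ?_⟩
  intro t ht b hts
  rw [List.mem_singleton] at hts
  subst hts
  exact fun h => hc (h ▸ ht)

lemma length_one_adj {a b : V} (p : G.Walk a b) (h : p.length = 1) : G.Adj a b := by
  cases p with
  | nil => simp at h
  | @cons a c b h' q =>
    have : q.length = 0 := by simpa using h
    exact (Walk.eq_of_length_eq_zero this) ▸ h'

lemma glue_isCycle {a b : V} (hab : a ≠ b) (p : G.Walk a b) (q : G.Walk b a)
    (hp : p.IsPath) (hq : q.IsPath) (hq2 : 2 ≤ q.length)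
    (hcom : ∀ x, x ∈ p.support → x ∈ q.support → x = a ∨ x = b) :
    (p.append q).IsCycle := by
  have hdisj : ∀ e, e ∈ p.edges → e ∈ q.edges → False := by
    intro e hep heq
    induction e using Sym2.ind with
    | _ x y =>
      have hadj : G.Adj x y := Walk.adj_of_mem_edges p hep
      have hx : x = a ∨ x = b := hcom x (Walk.fst_mem_support_of_mem_edges p hep)
        (Walk.fst_mem_support_of_mem_edges q heq)
      have hy : y = a ∨ y = b := hcom y (Walk.snd_mem_support_of_mem_edges p hep)
        (Walk.snd_mem_support_of_mem_edges q heq)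
      have : s(x, y) = s(b, a) := by
        rcases hx with rfl | rfl <;> rcases hy with rfl | rfl
        · exact absurd rfl hadj.ne
        · exact Sym2.eq_swap
        · rfl
        · exact absurd rfl hadj.ne
      rw [this] at heq
      have := path_edge_ends q hq heq
      omega
  refine ⟨⟨⟨?_⟩, ?_⟩, ?_⟩
  · rw [Walk.edges_append]
    exact List.Nodup.append hp.isTrail.edges_nodup hq.isTrail.edges_nodup hdisj
  · intro hnil
    have := congrArg Walk.length hnil
    rw [Walk.length_append] at this
    simp only [Walk.length_nil] at this
    omega
  · rw [Walk.tail_support_append]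
    have hnp : p.support.Nodup := hp.support_nodup
    have hnq : q.support.Nodup := hq.support_nodup
    refine List.Nodup.append hnp.tail hnq.tail ?_
    intro x hxp hxq
    have hxp' : x ∈ p.support := List.mem_of_mem_tail hxp
    have hxq' : x ∈ q.support := List.mem_of_mem_tail hxq
    rcases hcom x hxp' hxq' with rfl | rfl
    · rw [Walk.support_eq_cons] at hnp
      exact (List.nodup_cons.mp hnp).1 hxp
    · rw [Walk.support_eq_cons] at hnq
      exact (List.nodup_cons.mp hnq).1 hxq

lemma first_hit {x y : V} (p : G.Walk x y) (S : Set V) (hy : y ∈ S) :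
    ∃ (z : V) (p1 : G.Walk x z), z ∈ S ∧ (∀ t ∈ p1.support, t ∈ S → t = z) ∧
      (∀ t ∈ p1.support, t ∈ p.support) := by
  classical
  induction p with
  | nil => exact ⟨_, Walk.nil, hy, fun t ht _ => by simpa using ht, fun t ht => ht⟩
  | @cons a c b h q ih =>
    by_cases hx : a ∈ S
    · exact ⟨a, Walk.nil, hx, by simp, by simp⟩
    · obtain ⟨z, p1, hz, hprop, hsub⟩ := ih hy
      refine ⟨z, Walk.cons h p1, hz, ?_, ?_⟩
      · intro t ht htS
        rw [Walk.support_cons, List.mem_cons] at ht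
        rcases ht with rfl | ht
        · exact absurd htS hx
        · exact hprop t ht htS
      · intro t ht
        rw [Walk.support_cons, List.mem_cons] at ht ⊢
        rcases ht with rfl | ht
        · exact Or.inl rfl
        · exact Or.inr (hsub t ht)

lemma mem_tail_of_closed {v : V} (c : G.Walk v v) (hc : c ≠ Walk.nil) {x : V} :
    x ∈ c.support ↔ x ∈ c.support.tail := by
  cases c with
  | nil => exact absurd rfl hc
  | cons h q =>
    rw [Walk.support_cons]
    constructor
    · intro hx
      rcases List.mem_cons.mp hx with rfl | hx
      · exact q.end_mem_support
      · exact hx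
    · exact fun hx => List.mem_cons_of_mem _ hx

lemma mem_rotate [DecidableEq V] {v z : V} {c : G.Walk v v} (hc : c.IsCycle) (h : z ∈ c.support) {x : V} :
    x ∈ (c.rotate z h).support ↔ x ∈ c.support := by
  have h1 := Walk.support_rotate c z h
  rw [mem_tail_of_closed _ (hc.rotate h).ne_nil, mem_tail_of_closed _ hc.ne_nil,
    h1.mem_iff]

lemma exists_walk_avoid (hpc : ∀ z : V, (G.induce {z}ᶜ).Preconnected) (z x y : V)
    (hx : x ≠ z) (hy : y ≠ z) : ∃ p : G.Walk x y, z ∉ p.support := by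
  obtain ⟨W⟩ := hpc z ⟨x, by simpa using hx⟩ ⟨y, by simpa using hy⟩
  refine ⟨W.map (SimpleGraph.Embedding.induce ({z}ᶜ : Set V)).toHom, ?_⟩
  intro hmem
  replace hmem := Eq.mp (congrArg (z ∈ ·) (Walk.support_map _ W)) hmem
  obtain ⟨⟨t, ht⟩, -, h2⟩ := List.mem_map.mp hmem
  exact ht (by simpa using h2)

lemma exists_mem_notMem {s : Set V} (hs : 3 ≤ s.ncard) (v w : V) :
    ∃ x ∈ s, x ≠ v ∧ x ≠ w := by
  by_contra h
  push_neg at h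
  have hsub : s ⊆ {v, w} := by
    intro x hx
    rcases Classical.em (x = v) with rfl | hxv
    · exact Set.mem_insert _ _
    · exact Set.mem_insert_of_mem _ (h x hx hxv)
  have := Set.ncard_le_ncard hsub (Set.Finite.insert v (Set.finite_singleton w))
  have h2 : ({v, w} : Set V).ncard ≤ 2 := by
    apply le_trans (Set.ncard_insert_le v {w})
    simp
  omega

lemma two_neighbors_ne {s : Set V} (hfin : s.Finite) (hs : 3 ≤ s.ncard) (v : V) :
    ∃ x1 x2, x1 ∈ s ∧ x2 ∈ s ∧ x1 ≠ x2 ∧ x1 ≠ v ∧ x2 ≠ v := by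
  obtain ⟨a, ha, b, hb, c, hcs, hab, hac, hbc⟩ := (Set.two_lt_ncard hfin).mp (by omega)
  rcases Classical.em (a = v) with rfl | hav
  · exact ⟨b, c, hb, hcs, hbc, hab.symm, hac.symm⟩
  · rcases Classical.em (b = v) with rfl | hbv
    · exact ⟨a, c, ha, hcs, hac, hav, hbc.symm⟩
    · exact ⟨a, b, ha, hb, hab, hav, hbv⟩

lemma three_neighbors {s : Set V} (hfin : s.Finite) (hs : 3 ≤ s.ncard) :
    ∃ x1 x2 x3, x1 ∈ s ∧ x2 ∈ s ∧ x3 ∈ s ∧ x1 ≠ x2 ∧ x1 ≠ x3 ∧ x2 ≠ x3 := by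
  obtain ⟨a, ha, b, hb, c, hcs, hab, hac, hbc⟩ := (Set.two_lt_ncard hfin).mp (by omega)
  exact ⟨a, b, c, ha, hb, hcs, hab, hac, hbc⟩


lemma menger_two {H : SimpleGraph V} :
    ∀ (n : ℕ) (u v : V), H.dist u v = n → u ≠ v → ¬ H.Adj u v → H.Reachable u v →
      (∀ w : V, w ≠ u → w ≠ v → ∃ p : H.Walk u v, w ∉ p.support) →
      ∃ (r : V) (c : H.Walk r r), c.IsCycle ∧ u ∈ c.support ∧ v ∈ c.support := by
  intro n
  induction n using Nat.strong_induction_on with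
  | _ n ih =>
    intro u v hdist hne hadj hreach hyp
    classical
    have hn0 : n ≠ 0 := by
      rw [← hdist]
      exact SimpleGraph.dist_ne_zero_iff_ne_and_reachable.mpr ⟨hne, hreach⟩
    have hn1 : n ≠ 1 := by
      rintro rfl
      exact hadj (SimpleGraph.dist_eq_one_iff_adj.mp hdist)
    obtain ⟨p, hp⟩ := hreach.exists_walk_length_eq_dist
    rw [hdist] at hp
    obtain ⟨v', h, q0, hq0⟩ := Walk.exists_eq_cons_of_ne hne.symm p.reverse
    set q : H.Walk u v' := q0.reverse with hq
    have hpq : p = q.concat h.symm := by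
      have h2 := congrArg Walk.reverse hq0
      rw [Walk.reverse_reverse] at h2
      rw [h2, Walk.reverse_cons, hq, Walk.concat_eq_append]
    set k := q.length with hk
    have hkn : k + 1 = n := by rw [← hp, hpq, Walk.length_concat]
    have hd'le : H.dist u v' ≤ k := SimpleGraph.dist_le q
    have hd'ge : n ≤ H.dist u v' + 1 := by
      obtain ⟨s, hs⟩ := (Reachable.exists_walk_length_eq_dist (⟨q⟩ : H.Reachable u v'))
      calc n = H.dist u v := hdist.symm
        _ ≤ (s.concat h.symm).length := SimpleGraph.dist_le _
        _ = H.dist u v' + 1 := by rw [Walk.length_concat, hs]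
    have hd' : H.dist u v' = k := by omega
    have hvq : v ∉ q.support := by
      intro hv
      have h1 := SimpleGraph.dist_le (q.takeUntil v hv)
      have h2 := Walk.length_takeUntil_le q hv
      omega
    by_cases hk1 : k = 1
    · -- base case
      have hum : H.Adj u v' := length_one_adj q (by omega)
      have hmu : v' ≠ u := hum.ne'
      have hmv : v' ≠ v := h.ne'
      obtain ⟨R, hR⟩ := hyp v' hmu hmv
      set P1 := R.bypass with hP1
      have hP1path : P1.IsPath := R.bypass_isPath
      have hmP1 : v' ∉ P1.support := fun hmem => hR (R.support_bypass_subset hmem)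
      set q2 : H.Walk v u := Walk.cons h (Walk.cons hum.symm Walk.nil) with hq2
      have hq2path : q2.IsPath := by
        rw [hq2, Walk.isPath_def]
        simp [h.ne, hne.symm, hmu]
      have hq2len : 2 ≤ q2.length := by rw [hq2]; simp
      have hcom : ∀ x, x ∈ P1.support → x ∈ q2.support → x = u ∨ x = v := by
        intro x hxp hxq
        rw [hq2] at hxq
        simp only [Walk.support_cons, Walk.support_nil, List.mem_cons,
          List.mem_singleton, List.not_mem_nil, or_false] at hxq
        rcases hxq with rfl | rfl | rfl
        · exact Or.inr rfl
        · exact absurd hxp hmP1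
        · exact Or.inl rfl
      have hcyc := glue_isCycle hne P1 q2 hP1path hq2path hq2len hcom
      refine ⟨u, P1.append q2, hcyc, (P1.append q2).start_mem_support, ?_⟩
      rw [Walk.mem_support_append_iff]
      exact Or.inl P1.end_mem_support
    · -- inductive case
      have hk2 : 2 ≤ k := by omega
      have huv' : u ≠ v' := by
        rintro rfl
        rw [SimpleGraph.dist_self] at hd'; omega
      have hadj' : ¬ H.Adj u v' := by
        intro ha
        have h1 := SimpleGraph.dist_le (Walk.cons ha Walk.nil : H.Walk u v')
        simp at h1
        omega
      have hyp' : ∀ w : V, w ≠ u → w ≠ v' → ∃ p : H.Walk u v', w ∉ p.support := by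
        intro w hw_u hw_v'
        by_cases hwv : w = v
        · exact ⟨q, hwv ▸ hvq⟩
        · obtain ⟨Q, hQ⟩ := hyp w hw_u hwv
          by_cases hv'Q : v' ∈ Q.support
          · exact ⟨Q.takeUntil v' hv'Q, fun hw => hQ (Walk.support_takeUntil_subset Q hv'Q hw)⟩
          · refine ⟨Q.concat h, ?_⟩
            rw [Walk.support_concat]
            intro hw
            rcases List.mem_append.mp hw with hw' | hw'
            · exact hQ hw'
            · exact hw_v' (List.mem_singleton.mp hw')
      obtain ⟨r, C, hC, huC, hv'C⟩ := ih k (by omega) u v' hd' huv' hadj'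
        ((⟨q⟩ : H.Reachable u v')) hyp'
      by_cases hvC : v ∈ C.support
      · exact ⟨r, C, hC, huC, hvC⟩
      · obtain ⟨R, hR⟩ := hyp v' huv'.symm h.ne'
        set P2 := R.reverse.bypass with hP2
        have hP2path : P2.IsPath := R.reverse.bypass_isPath
        have hP2sub : ∀ t ∈ P2.support, t ∈ R.support := by
          intro t ht
          have h3 := R.reverse.support_bypass_subset ht
          rwa [Walk.support_reverse, List.mem_reverse] at h3
        obtain ⟨z, R1, hzC, hfirst, hsubP2⟩ := first_hit P2 {x | x ∈ C.support} huC
        have hzC' : z ∈ C.support := hzC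
        have hz_ne_v : z ≠ v := by rintro rfl; exact hvC hzC'
        have hz_ne_v' : z ≠ v' := by
          rintro rfl
          exact hR (hP2sub _ (hsubP2 _ R1.end_mem_support))
        set R1p := R1.bypass with hR1p
        have hR1path : R1p.IsPath := R1.bypass_isPath
        set D := C.rotate z hzC' with hD
        have hDcyc : D.IsCycle := hC.rotate hzC'
        have memD : ∀ x : V, x ∈ D.support ↔ x ∈ C.support := fun x => mem_rotate hC hzC'
        have hv'D : v' ∈ D.support := (memD v').mpr hv'C
        set A1 := D.takeUntil v' hv'D with hA1
        set A2 := D.dropUntil v' hv'D with hA2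
        have hspec : A1.append A2 = D := D.take_spec hv'D
        have hDtail : D.support.tail = A1.support.tail ++ A2.support.tail := by
          rw [← hspec, Walk.tail_support_append]
        have hDnodup := hDcyc.support_nodup
        rw [hDtail, List.nodup_append] at hDnodup
        obtain ⟨nd1, nd2, disj⟩ := hDnodup
        have hv'A1tail : v' ∈ A1.support.tail := by
          have hv'sup : v' ∈ A1.support := A1.end_mem_support
          rw [Walk.support_eq_cons, List.mem_cons] at hv'sup
          rcases hv'sup with h' | h'
          · exact absurd h'.symm hz_ne_v'
          · exact h'
        have hzA2tail : z ∈ A2.support.tail := by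
          have hzsup : z ∈ A2.support := A2.end_mem_support
          rw [Walk.support_eq_cons, List.mem_cons] at hzsup
          rcases hzsup with h' | h'
          · exact absurd h' hz_ne_v'
          · exact h'
        have hA1path : A1.IsPath := by
          rw [Walk.isPath_def, Walk.support_eq_cons, List.nodup_cons]
          exact ⟨fun hzin => disj _ hzin _ hzA2tail rfl, nd1⟩
        have hA2path : A2.IsPath := by
          rw [Walk.isPath_def, Walk.support_eq_cons, List.nodup_cons]
          exact ⟨fun hv'in => disj _ hv'A1tail _ hv'in rfl, nd2⟩
        have hA1sub : ∀ t ∈ A1.support, t ∈ C.support := fun t ht =>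
          (memD t).mp (Walk.support_takeUntil_subset D hv'D ht)
        have hA2sub : ∀ t ∈ A2.support, t ∈ C.support := fun t ht =>
          (memD t).mp (Walk.support_dropUntil_subset D hv'D ht)
        have huA : u ∈ A1.support ∨ u ∈ A2.support := by
          have h4 : u ∈ D.support := (memD u).mpr huC
          rw [← hspec, Walk.mem_support_append_iff] at h4
          exact h4
        obtain ⟨B, hBpath, huB, hBsub⟩ :
            ∃ B : H.Walk z v', B.IsPath ∧ u ∈ B.support ∧ ∀ t ∈ B.support, t ∈ C.support := by
          rcases huA with h' | h'
          · exact ⟨A1, hA1path, h', hA1sub⟩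
          · refine ⟨A2.reverse, hA2path.reverse, ?_, ?_⟩
            · rw [Walk.support_reverse, List.mem_reverse]; exact h'
            · intro t ht
              rw [Walk.support_reverse, List.mem_reverse] at ht
              exact hA2sub t ht
        have hvB : v ∉ B.support := fun hmem => hvC (hBsub v hmem)
        have hqfpath : (B.concat h.symm).IsPath := concat_isPath B hBpath h.symm hvB
        have hBlen : B.length ≠ 0 := fun h0 => hz_ne_v' (Walk.eq_of_length_eq_zero h0)
        have hqflen : 2 ≤ (B.concat h.symm).length := by rw [Walk.length_concat]; omega
        have hR1pav : ∀ t ∈ R1p.support, t ∈ R1.support := fun t ht =>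
          R1.support_bypass_subset ht
        have hcom : ∀ x, x ∈ R1p.support → x ∈ (B.concat h.symm).support →
            x = v ∨ x = z := by
          intro x hxp hxq
          rw [Walk.support_concat, List.mem_append] at hxq
          rcases hxq with hxB | hxv
          · exact Or.inr (hfirst x (hR1pav x hxp) (hBsub x hxB))
          · exact Or.inl (List.mem_singleton.mp hxv)
        have hcyc := glue_isCycle hz_ne_v.symm R1p (B.concat h.symm) hR1path hqfpath
          hqflen hcom
        refine ⟨v, R1p.append (B.concat h.symm), hcyc, ?_,
          (R1p.append (B.concat h.symm)).start_mem_support⟩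
        rw [Walk.mem_support_append_iff]
        right
        rw [Walk.support_concat, List.mem_append]
        exact Or.inl huB


/-- In a chordless graph with no 1-cutset, adjacent vertices where one has degree ≥ 3
have no common neighbor. -/
lemma no_common_neighbor (hc : G.IsChordless)
    (hpc : ∀ z : V, (G.induce {z}ᶜ).Preconnected)
    {u v w : V} (huv : G.Adj u v) (hdu : 3 ≤ (G.neighborSet u).ncard)
    (hwu : G.Adj u w) (hwv : G.Adj v w) : False := by
  classical
  obtain ⟨x, hxN, hxv, hxw⟩ := exists_mem_notMem hdu v w
  have hux : G.Adj u x := hxN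
  obtain ⟨W, hW⟩ := exists_walk_avoid hpc u x v hux.ne' huv.ne'
  set P := W.bypass with hP
  have hPpath : P.IsPath := W.bypass_isPath
  have huP : u ∉ P.support := fun hm => hW (W.support_bypass_subset hm)
  by_cases hwP : w ∈ P.support
  · -- cycle u - x - P - v - u, with chord uw
    have hqpath : (P.concat huv.symm).IsPath := concat_isPath P hPpath huv.symm huP
    have hnocons : s(u, x) ∉ (P.concat huv.symm).edges := by
      rw [Walk.edges_concat, List.concat_eq_append, List.mem_append]
      rintro (hmem | hmem)
      · exact huP (Walk.fst_mem_support_of_mem_edges P hmem)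
      · rw [List.mem_singleton, Sym2.eq_iff] at hmem
        rcases hmem with ⟨rfl, -⟩ | ⟨-, rfl⟩
        · exact huv.ne rfl
        · exact hxv rfl
    have hcyc : (Walk.cons hux (P.concat huv.symm)).IsCycle :=
      (Walk.cons_isCycle_iff _ _).mpr ⟨hqpath, hnocons⟩
    have hwsup : w ∈ (Walk.cons hux (P.concat huv.symm)).support := by
      rw [Walk.support_cons, List.mem_cons]
      right
      rw [Walk.support_concat, List.mem_append]
      exact Or.inl hwP
    have hchord := hc u _ hcyc u w (Walk.start_mem_support _) hwsup hwu
    rw [Walk.edges_cons, List.mem_cons] at hchord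
    rcases hchord with hmem | hmem
    · rw [Sym2.eq_iff] at hmem
      rcases hmem with ⟨-, rfl⟩ | ⟨rfl, -⟩
      · exact hxw rfl
      · exact hux.ne rfl
    · rw [Walk.edges_concat, List.concat_eq_append, List.mem_append] at hmem
      rcases hmem with hmem | hmem
      · exact huP (Walk.fst_mem_support_of_mem_edges P hmem)
      · rw [List.mem_singleton, Sym2.eq_iff] at hmem
        rcases hmem with ⟨rfl, -⟩ | ⟨-, rfl⟩
        · exact huv.ne rfl
        · exact hwv.ne' rfl
  · -- cycle u - x - P - v - w - u, with chord uv
    have hq1path : (P.concat hwv).IsPath := concat_isPath P hPpath hwv hwP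
    have huq1 : u ∉ (P.concat hwv).support := by
      rw [Walk.support_concat, List.mem_append]
      rintro (hm | hm)
      · exact huP hm
      · exact hwu.ne (List.mem_singleton.mp hm)
    have hq2path : ((P.concat hwv).concat hwu.symm).IsPath :=
      concat_isPath _ hq1path hwu.symm huq1
    have hxP : x ∈ P.support := P.start_mem_support
    have hnocons : s(u, x) ∉ ((P.concat hwv).concat hwu.symm).edges := by
      rw [Walk.edges_concat, Walk.edges_concat]
      simp only [List.concat_eq_append, List.append_assoc, List.mem_append,
        List.mem_singleton]
      rintro (hmem | hmem | hmem)
      · exact huP (Walk.fst_mem_support_of_mem_edges P hmem)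
      · rw [Sym2.eq_iff] at hmem
        rcases hmem with ⟨rfl, -⟩ | ⟨rfl, -⟩
        · exact huv.ne rfl
        · exact hwu.ne' rfl
      · rw [Sym2.eq_iff] at hmem
        rcases hmem with ⟨rfl, -⟩ | ⟨-, rfl⟩
        · exact hwu.ne' rfl
        · exact hwP hxP
    have hcyc : (Walk.cons hux ((P.concat hwv).concat hwu.symm)).IsCycle :=
      (Walk.cons_isCycle_iff _ _).mpr ⟨hq2path, hnocons⟩
    have hvsup : v ∈ (Walk.cons hux ((P.concat hwv).concat hwu.symm)).support := by
      rw [Walk.support_cons, List.mem_cons]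
      right
      rw [Walk.support_concat, Walk.support_concat]
      simp only [List.concat_eq_append, List.append_assoc, List.mem_append]
      exact Or.inl P.end_mem_support
    have hchord := hc u _ hcyc u v (Walk.start_mem_support _) hvsup huv
    rw [Walk.edges_cons, List.mem_cons] at hchord
    rcases hchord with hmem | hmem
    · rw [Sym2.eq_iff] at hmem
      rcases hmem with ⟨-, rfl⟩ | ⟨rfl, -⟩
      · exact hxv rfl
      · exact hux.ne rfl
    · rw [Walk.edges_concat, Walk.edges_concat] at hmem
      simp only [List.concat_eq_append, List.append_assoc, List.mem_append,
        List.mem_singleton] at hmem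
      rcases hmem with hmem | hmem | hmem
      · exact huP (Walk.fst_mem_support_of_mem_edges P hmem)
      · rw [Sym2.eq_iff] at hmem
        rcases hmem with ⟨rfl, -⟩ | ⟨rfl, -⟩
        · exact huv.ne rfl
        · exact hwu.ne' rfl
      · rw [Sym2.eq_iff] at hmem
        rcases hmem with ⟨rfl, -⟩ | ⟨-, rfl⟩
        · exact hwu.ne' rfl
        · exact hwv.ne rfl


lemma cutset_case [Fintype V] {H : SimpleGraph V} {u v w : V}
    (huv : G.Adj u v) (hdu : 3 ≤ (G.neighborSet u).ncard) (hdv : 3 ≤ (G.neighborSet v).ncard)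
    (hHadj : ∀ x y : V, H.Adj x y ↔ G.Adj x y ∧ ¬(x = u ∧ y = v) ∧ ¬(x = v ∧ y = u))
    (hwu : w ≠ u) (hwv : w ≠ v) (hnadj : ¬ G.Adj u w)
    (hsep : ∀ p : H.Walk u v, w ∈ p.support) :
    ∃ a b : V, a ≠ b ∧ ¬ G.Adj a b ∧
      ∃ X Y : Set V, X.Nonempty ∧ Y.Nonempty ∧ Disjoint X Y ∧
        X ∪ Y = ({a, b} : Set V)ᶜ ∧
        (∀ x ∈ X, ∀ y ∈ Y, ¬ G.Adj x y) ∧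
        ¬ G.InduceIsPathFromTo X a b ∧ ¬ G.InduceIsPathFromTo Y a b := by
  classical
  set U : Set V := {z | z ≠ w ∧ ∃ p : H.Walk u z, w ∉ p.support} with hU
  have huU : u ∈ U := ⟨fun h => hwu h.symm, Walk.nil, by simp [hwu]⟩
  have hvU : v ∉ U := by
    rintro ⟨-, p, hp⟩
    exact hp (hsep p)
  have hUext : ∀ x ∈ U, ∀ y : V, H.Adj x y → y ≠ w → y ∈ U := by
    rintro x ⟨hxw, p, hp⟩ y hxy hyw
    refine ⟨hyw, p.concat hxy, ?_⟩
    rw [Walk.support_concat, List.mem_append]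
    rintro (hm | hm)
    · exact hp hm
    · exact hyw (List.mem_singleton.mp hm).symm
  have hNX : ∀ x : V, G.Adj u x → x ≠ v → x ∈ U ∧ x ≠ u := by
    intro x hux hxv
    have hxw : x ≠ w := fun hxw => hnadj (hxw ▸ hux)
    have hH : H.Adj u x := (hHadj u x).mpr ⟨hux, fun hh => hxv hh.2, fun hh => huv.ne hh.1⟩
    exact ⟨hUext u huU x hH hxw, hux.ne'⟩
  set X : Set V := U \ {u} with hX
  set Y : Set V := (U ∪ {w})ᶜ with hY
  have hvY : v ∈ Y := by
    rw [hY]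
    simp only [Set.mem_compl_iff, Set.mem_union, Set.mem_singleton_iff]
    rintro (hm | hm)
    · exact hvU hm
    · exact hwv hm.symm
  refine ⟨u, w, fun h => hwu h.symm, hnadj, X, Y, ?_, ⟨v, hvY⟩, ?_, ?_, ?_, ?_, ?_⟩
  · -- X nonempty
    obtain ⟨x, hxN, hxv, -⟩ := exists_mem_notMem hdu v v
    obtain ⟨hxU, hxu⟩ := hNX x hxN hxv
    exact ⟨x, hxU, hxu⟩
  · -- disjoint
    rw [Set.disjoint_left]
    rintro z ⟨hzU, -⟩ hzY
    rw [hY] at hzY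
    exact hzY (Or.inl hzU)
  · -- union
    ext z
    simp only [hX, hY, Set.mem_union, Set.mem_diff, Set.mem_compl_iff,
      Set.mem_singleton_iff, Set.mem_insert_iff]
    constructor
    · rintro (⟨hzU, hzu⟩ | hz)
      · exact fun hm => hm.elim hzu hzU.1
      · push_neg at hz
        exact fun hm => hm.elim (fun h => hz.1 (h ▸ huU)) hz.2
    · intro hz
      push_neg at hz
      by_cases hzU : z ∈ U
      · exact Or.inl ⟨hzU, hz.1⟩
      · exact Or.inr (fun hm => hm.elim hzU hz.2)
  · -- no edges between X and Y
    rintro x ⟨hxU, hxu⟩ y hyY hadj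
    rw [Set.mem_singleton_iff] at hxu
    have hyY' := hyY
    rw [hY] at hyY'
    simp only [Set.mem_compl_iff, Set.mem_union, Set.mem_singleton_iff] at hyY'
    push_neg at hyY'
    have hH : H.Adj x y := (hHadj x y).mpr ⟨hadj, fun hh => hxu hh.1,
      fun hh => hvU (hh.1 ▸ hxU)⟩
    exact hyY'.1 (hUext x hxU y hH hyY'.2)
  · -- X side is not a path
    rintro ⟨p, hp, hsupp, hedges⟩
    obtain ⟨x1, x2, hx1N, hx2N, hx12, hx1v, hx2v⟩ :=
      two_neighbors_ne (Set.toFinite _) hdu v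
    have hx1X : x1 ∈ X := by
      obtain ⟨h1, h2⟩ := hNX x1 hx1N hx1v; exact ⟨h1, h2⟩
    have hx2X : x2 ∈ X := by
      obtain ⟨h1, h2⟩ := hNX x2 hx2N hx2v; exact ⟨h1, h2⟩
    have hx1s : x1 ∈ p.support := (Set.ext_iff.mp hsupp x1).mpr (Or.inl hx1X)
    have hx2s : x2 ∈ p.support := (Set.ext_iff.mp hsupp x2).mpr (Or.inl hx2X)
    have e1 := hedges u x1 p.start_mem_support hx1s hx1N
    have e2 := hedges u x2 p.start_mem_support hx2s hx2N
    exact hx12 (start_edge_unique p hp e1 e2)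
  · -- Y side is not a path
    rintro ⟨p, hp, hsupp, hedges⟩
    obtain ⟨y1, y2, y3, hy1N, hy2N, hy3N, h12, h13, h23⟩ :=
      three_neighbors (Set.toFinite _) hdv
    have hvs : v ∈ p.support := (Set.ext_iff.mp hsupp v).mpr (Or.inl hvY)
    have hymem : ∀ y : V, G.Adj v y → y ∈ p.support := by
      intro y hvy
      apply (Set.ext_iff.mp hsupp y).mpr
      by_cases hyu : y = u
      · exact Or.inr (Or.inl hyu)
      · by_cases hyw : y = w
        · exact Or.inr (Or.inr hyw)
        · left
          rw [hY]
          simp only [Set.mem_compl_iff, Set.mem_union, Set.mem_singleton_iff]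
          rintro (hyU | hyw')
          · -- y ∈ U gives a u-v walk avoiding w
            have hH : H.Adj y v := (hHadj y v).mpr ⟨hvy.symm, fun hh => hyu hh.1,
              fun hh => hvy.ne' hh.1⟩
            have : v ∈ U := hUext y hyU v hH (fun h => hwv h.symm)
            exact hvU this
          · exact hyw hyw'
    have e1 := hedges v y1 hvs (hymem y1 hy1N) hy1N
    have e2 := hedges v y2 hvs (hymem y2 hy2N) hy2N
    have e3 := hedges v y3 hvs (hymem y3 hy3N) hy3N
    exact path_no_three p hp e1 e2 e3 h12 h13 h23


end ChordlessProofAux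

open ChordlessProofAux

/-- Every chordless graph is sparse, or has a 1-cutset, or has a proper 2-cutset. -/
theorem chordless_decomposition {V : Type*} [Fintype V] (G : SimpleGraph V)
    (hc : G.IsChordless) :
    G.IsSparse ∨
      (∃ v : V, ¬ (G.induce {v}ᶜ).Preconnected) ∨
      (∃ a b : V, a ≠ b ∧ ¬ G.Adj a b ∧
        ∃ X Y : Set V, X.Nonempty ∧ Y.Nonempty ∧ Disjoint X Y ∧
          X ∪ Y = ({a, b} : Set V)ᶜ ∧
          (∀ x ∈ X, ∀ y ∈ Y, ¬ G.Adj x y) ∧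
          ¬ G.InduceIsPathFromTo X a b ∧ ¬ G.InduceIsPathFromTo Y a b) := by
  classical
  by_cases hs : G.IsSparse
  · exact Or.inl hs
  right
  by_cases h1 : ∃ v : V, ¬ (G.induce {v}ᶜ).Preconnected
  · exact Or.inl h1
  right
  push_neg at h1
  rw [SimpleGraph.IsSparse] at hs
  push_neg at hs
  obtain ⟨u, v, huv, hdu, hdv⟩ := hs
  set H := G.deleteEdges {s(u, v)} with hH
  have hHadj : ∀ x y : V, H.Adj x y ↔ G.Adj x y ∧ ¬(x = u ∧ y = v) ∧ ¬(x = v ∧ y = u) := by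
    intro x y
    rw [hH, SimpleGraph.deleteEdges_adj, Set.mem_singleton_iff, Sym2.eq_iff]
    tauto
  have hedge : ∀ {x y : V} (W : G.Walk x y), u ∉ W.support →
      ∀ e ∈ W.edges, e ∈ H.edgeSet := by
    intro x y W hW e he
    rw [hH, SimpleGraph.edgeSet_deleteEdges, Set.mem_diff, Set.mem_singleton_iff]
    refine ⟨W.edges_subset_edgeSet he, ?_⟩
    rintro rfl
    exact hW (Walk.fst_mem_support_of_mem_edges W he)
  have hreach : H.Reachable u v := by
    obtain ⟨x, hxN, hxv, -⟩ := exists_mem_notMem hdu v v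
    have hux : G.Adj u x := hxN
    obtain ⟨W, hW⟩ := exists_walk_avoid h1 u x v hux.ne' huv.ne'
    have hHux : H.Adj u x := (hHadj u x).mpr ⟨hux, fun hh => hxv hh.2, fun hh => huv.ne hh.1⟩
    exact ⟨Walk.cons hHux (W.transfer H (hedge W hW))⟩
  have hHnadj : ¬ H.Adj u v := by
    rw [hHadj]
    rintro ⟨-, h2, -⟩
    exact h2 ⟨rfl, rfl⟩
  by_cases hmeng : ∀ w : V, w ≠ u → w ≠ v → ∃ p : H.Walk u v, w ∉ p.support
  · exfalso
    obtain ⟨r, c, hcyc, hus, hvs⟩ :=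
      menger_two (H.dist u v) u v rfl huv.ne hHnadj hreach hmeng
    have hce : ∀ e ∈ c.edges, e ∈ G.edgeSet := by
      intro e he
      have h2 := c.edges_subset_edgeSet he
      rw [hH, SimpleGraph.edgeSet_deleteEdges] at h2
      exact h2.1
    have hchord := hc r (c.transfer G hce) (hcyc.transfer hce) u v
      (by rw [Walk.support_transfer]; exact hus)
      (by rw [Walk.support_transfer]; exact hvs) huv
    rw [Walk.edges_transfer] at hchord
    have h2 := c.edges_subset_edgeSet hchord
    rw [hH, SimpleGraph.edgeSet_deleteEdges, Set.mem_diff, Set.mem_singleton_iff] at h2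
    exact h2.2 rfl
  · push_neg at hmeng
    obtain ⟨w, hwu, hwv, hsepw⟩ := hmeng
    by_cases hadj_uw : G.Adj u w
    · have hnvw : ¬ G.Adj v w := fun hvw =>
        no_common_neighbor hc h1 huv hdu hadj_uw hvw
      have hHadj' : ∀ x y : V, H.Adj x y ↔ G.Adj x y ∧ ¬(x = v ∧ y = u) ∧ ¬(x = u ∧ y = v) := by
        intro x y
        rw [hHadj]
        tauto
      have hsep' : ∀ p : H.Walk v u, w ∈ p.support := by
        intro p
        have h2 := hsepw p.reverse
        rwa [Walk.support_reverse, List.mem_reverse] at h2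
      exact cutset_case huv.symm hdv hdu hHadj' hwv hwu hnvw hsep'
    · exact cutset_case huv hdu hdv hHadj hwu hwv hadj_uw hsepw
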